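/- arXiv:2510.07728 — 2 statements merged into one kernel-verified Lean document; each statement's English description precedes it below -/
import Mathlib

section
/- Suppose each token k of a vocabulary is placed in the green set G independently with probability γ. Then for the watermarked sampling probability p̂_k = E_{G}[ α^{1(k∈G)} p_k / (Σ_{i∉G} p_i + α Σ_{i∈G} p_i) ] with α ≥ 1, it holds that p̂_k ≤ (1 + (α-1)γ) p_k. -/
open Finset

lemma aux_A {V : Type*} [DecidableEq V] (γ : ℝ) (s : Finset V) :
    ∑ G ∈ s.powerset, γ ^ G.card * (1 - γ) ^ (s.card - G.card) = 1 := by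
  have h1 : ∑ G ∈ s.powerset, γ ^ G.card * (1 - γ) ^ (s.card - G.card)
      = ∑ G ∈ s.powerset, (∏ _i ∈ G, γ) * ∏ _i ∈ s \ G, (1 - γ) := by
    refine Finset.sum_congr rfl fun t ht => ?_
    rw [Finset.prod_const, Finset.prod_const,
      Finset.card_sdiff_of_subset (Finset.mem_powerset.mp ht)]
  rw [h1, ← Finset.prod_add]
  simp

lemma aux_B {V : Type*} [Fintype V] [DecidableEq V] (γ : ℝ) (k : V) :
    ∑ G : Finset V, (if k ∈ G then (1:ℝ) else 0) *
        (γ ^ G.card * (1 - γ) ^ (Fintype.card V - G.card)) = γ := by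
  classical
  set s := Finset.univ.erase k with hs
  have hk : k ∉ s := Finset.notMem_erase k _
  have huniv : (Finset.univ : Finset V) = insert k s := by
    rw [hs, Finset.insert_erase (Finset.mem_univ k)]
  have hcard : s.card + 1 = Fintype.card V := by
    have h1 : 1 ≤ Fintype.card V := Fintype.card_pos_iff.mpr ⟨k⟩
    rw [hs, Finset.card_erase_of_mem (Finset.mem_univ k), Finset.card_univ]
    omega
  have hrw : ∑ G : Finset V, (if k ∈ G then (1:ℝ) else 0) *
        (γ ^ G.card * (1 - γ) ^ (Fintype.card V - G.card))
      = ∑ G ∈ (insert k s).powerset, (if k ∈ G then (1:ℝ) else 0) *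
        (γ ^ G.card * (1 - γ) ^ (Fintype.card V - G.card)) := by
    rw [← huniv, Finset.powerset_univ]
  rw [hrw, Finset.sum_powerset_insert hk]
  have hZ : ∑ t ∈ s.powerset, (if k ∈ t then (1:ℝ) else 0) *
        (γ ^ t.card * (1 - γ) ^ (Fintype.card V - t.card)) = 0 := by
    refine Finset.sum_eq_zero fun t ht => ?_
    have : k ∉ t := fun h => hk (Finset.mem_powerset.mp ht h)
    simp [this]
  rw [hZ, zero_add]
  have h2 : ∑ t ∈ s.powerset, (if k ∈ insert k t then (1:ℝ) else 0) *
        (γ ^ (insert k t).card * (1 - γ) ^ (Fintype.card V - (insert k t).card))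
      = γ * ∑ t ∈ s.powerset, γ ^ t.card * (1 - γ) ^ (s.card - t.card) := by
    rw [Finset.mul_sum]
    refine Finset.sum_congr rfl fun t ht => ?_
    have htk : k ∉ t := fun h => hk (Finset.mem_powerset.mp ht h)
    have hc : (insert k t).card = t.card + 1 := Finset.card_insert_of_notMem htk
    have htcard : t.card ≤ s.card := Finset.card_le_card (Finset.mem_powerset.mp ht)
    rw [hc, show Fintype.card V - (t.card + 1) = s.card - t.card from by omega]
    simp [Finset.mem_insert_self, pow_succ]
    ring
  rw [h2, aux_A, mul_one]

/-- With each token independently green with probability `γ`, the expected watermarked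
sampling probability of token `k` satisfies `p̂_k ≤ (1 + (α-1)γ) p_k`. The expectation
over the random green set `G` is written as a sum over all subsets weighted by
`γ^|G| (1-γ)^(n-|G|)`. -/
theorem stmt_7 {V : Type*} [Fintype V] [DecidableEq V] (p : V → ℝ)
    (hp : ∀ v, 0 ≤ p v) (hsum : ∑ v, p v = 1)
    (γ α : ℝ) (hγ : γ ∈ Set.Icc (0 : ℝ) 1) (hα : 1 ≤ α) (k : V) :
    ∑ G : Finset V, γ ^ G.card * (1 - γ) ^ (Fintype.card V - G.card) *
        ((if k ∈ G then α else 1) * p k / ((∑ i ∈ Gᶜ, p i) + α * ∑ i ∈ G, p i))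
      ≤ (1 + (α - 1) * γ) * p k := by
  classical
  obtain ⟨hγ0, hγ1⟩ := hγ
  have key : ∀ G : Finset V,
      γ ^ G.card * (1 - γ) ^ (Fintype.card V - G.card) *
        ((if k ∈ G then α else 1) * p k / ((∑ i ∈ Gᶜ, p i) + α * ∑ i ∈ G, p i))
      ≤ γ ^ G.card * (1 - γ) ^ (Fintype.card V - G.card) *
        ((if k ∈ G then α else 1) * p k) := by
    intro G
    have hw : 0 ≤ γ ^ G.card * (1 - γ) ^ (Fintype.card V - G.card) :=
      mul_nonneg (pow_nonneg hγ0 _) (pow_nonneg (by linarith) _)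
    refine mul_le_mul_of_nonneg_left ?_ hw
    have hnum : 0 ≤ (if k ∈ G then α else 1) * p k :=
      mul_nonneg (by split <;> linarith) (hp k)
    have hD : 1 ≤ (∑ i ∈ Gᶜ, p i) + α * ∑ i ∈ G, p i := by
      have h1 : (∑ i ∈ G, p i) + ∑ i ∈ Gᶜ, p i = 1 := by
        rw [Finset.sum_add_sum_compl, hsum]
      have hG : 0 ≤ ∑ i ∈ G, p i := Finset.sum_nonneg fun i _ => hp i
      nlinarith
    exact div_le_self hnum hD
  calc ∑ G : Finset V, γ ^ G.card * (1 - γ) ^ (Fintype.card V - G.card) *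
        ((if k ∈ G then α else 1) * p k / ((∑ i ∈ Gᶜ, p i) + α * ∑ i ∈ G, p i))
      ≤ ∑ G : Finset V, γ ^ G.card * (1 - γ) ^ (Fintype.card V - G.card) *
        ((if k ∈ G then α else 1) * p k) := Finset.sum_le_sum fun G _ => key G
    _ = (1 + (α - 1) * γ) * p k := by
        have hA : ∑ G : Finset V, γ ^ G.card * (1 - γ) ^ (Fintype.card V - G.card) = 1 := by
          have := aux_A γ (Finset.univ : Finset V)
          rwa [Finset.powerset_univ, Finset.card_univ] at this
        have hB := aux_B γ k
        have hsplit : ∀ G : Finset V,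
            γ ^ G.card * (1 - γ) ^ (Fintype.card V - G.card) *
              ((if k ∈ G then α else 1) * p k)
            = (γ ^ G.card * (1 - γ) ^ (Fintype.card V - G.card)
              + (α - 1) * ((if k ∈ G then (1:ℝ) else 0) *
                (γ ^ G.card * (1 - γ) ^ (Fintype.card V - G.card)))) * p k := by
          intro G
          split <;> ring
        rw [Finset.sum_congr rfl fun G _ => hsplit G, ← Finset.sum_mul,
          Finset.sum_add_distrib, ← Finset.mul_sum, hA, hB]
end

section
/- Modifying m tokens in a sequence of length T, where each modified token can affect at most k+1 green/red indicator outcomes, changes the count of green tokens by at most (k+1)m, and hence changes the standardized statistic Z = (|s|_G − T/2)/(√T/2) by at most 2(k+1)m/√T. -/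
open Finset

/-- If modifying `m` tokens changes at most `(k+1)*m` green/red indicator outcomes,
then the green-token count changes by at most `(k+1)*m`, and the standardized
statistic `Z = (|s|_G - T/2)/(√T/2)` changes by at most `2(k+1)m/√T`. -/
theorem stmt_9 (T : ℕ) (hT : 0 < T) (k m : ℕ)
    (g g' : Fin T → ℝ)
    (h01 : ∀ t, g t = 0 ∨ g t = 1) (h01' : ∀ t, g' t = 0 ∨ g' t = 1)
    (hdiff : (Finset.univ.filter (fun t => g t ≠ g' t)).card ≤ (k + 1) * m) :
    |(∑ t, g' t) - ∑ t, g t| ≤ ((k : ℝ) + 1) * m ∧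
      |((∑ t, g' t) - (T : ℝ) / 2) / (Real.sqrt T / 2)
          - ((∑ t, g t) - (T : ℝ) / 2) / (Real.sqrt T / 2)|
        ≤ 2 * ((k : ℝ) + 1) * m / Real.sqrt T := by
  have h1 : |(∑ t, g' t) - ∑ t, g t| ≤ ((k : ℝ) + 1) * m := by
    rw [← Finset.sum_sub_distrib]
    calc |∑ t, (g' t - g t)| ≤ ∑ t, |g' t - g t| := Finset.abs_sum_le_sum_abs _ _
      _ ≤ ∑ t ∈ Finset.univ.filter (fun t => g t ≠ g' t), 1 := by
          rw [Finset.sum_filter]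
          apply Finset.sum_le_sum
          intro t _
          by_cases h : g t ≠ g' t
          · rw [if_pos h]
            rcases h01 t with h1 | h1 <;> rcases h01' t with h2 | h2 <;>
              rw [h1, h2] <;> norm_num
          · push_neg at h
            simp [h]
      _ ≤ ((k : ℝ) + 1) * m := by
          rw [Finset.sum_const, nsmul_eq_mul, mul_one]
          calc ((Finset.univ.filter (fun t => g t ≠ g' t)).card : ℝ)
              ≤ ((k + 1) * m : ℕ) := by exact_mod_cast hdiff
            _ = ((k : ℝ) + 1) * m := by push_cast; ring
  refine ⟨h1, ?_⟩
  have hs : (0 : ℝ) < Real.sqrt T := Real.sqrt_pos.mpr (by exact_mod_cast hT)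
  rw [div_sub_div_same, div_div_eq_mul_div, abs_div, abs_of_pos hs]
  rw [div_le_div_iff₀ hs hs]
  have : |((∑ t, g' t) - (T : ℝ) / 2 - ((∑ t, g t) - (T : ℝ) / 2)) * 2|
      = |(∑ t, g' t) - ∑ t, g t| * 2 := by
    rw [abs_mul, abs_two]; congr 2; ring
  calc |((∑ t, g' t) - (T : ℝ) / 2 - ((∑ t, g t) - (T : ℝ) / 2)) * 2| * Real.sqrt T
      = |(∑ t, g' t) - ∑ t, g t| * 2 * Real.sqrt T := by rw [this]
    _ ≤ ((k : ℝ) + 1) * m * 2 * Real.sqrt T := by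
        apply mul_le_mul_of_nonneg_right _ hs.le
        exact mul_le_mul_of_nonneg_right h1 (by norm_num)
    _ = 2 * ((k : ℝ) + 1) * m * Real.sqrt T := by ring
end
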